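/- arXiv:2501.14666 — 3 statements merged into one kernel-verified Lean document; each statement's English description precedes it below -/
import Mathlib

section
/- The function φ(t) = cos(2t) + cosh(2t) + t·sin(2t) − t·sinh(2t) satisfies φ(0) = 2 > 0 and tends to −∞ as t → ∞; together with strict monotone decrease on (0,∞), the equation φ(t) = 0 has a unique positive solution. -/
open Real Set Filter

private lemma hd_phi (t : ℝ) :
    HasDerivAt (fun t : ℝ =>
      Real.cos (2 * t) + Real.cosh (2 * t) + t * Real.sin (2 * t) - t * Real.sinh (2 * t))
      (Real.sinh (2*t) - Real.sin (2*t) + (2*t) * Real.cos (2*t) - (2*t) * Real.cosh (2*t)) t := by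
  have h2 : HasDerivAt (fun t : ℝ => 2 * t) 2 t := by
    simpa using (hasDerivAt_id t).const_mul 2
  have hc := (Real.hasDerivAt_cos (2*t)).comp t h2
  have hch := (Real.hasDerivAt_cosh (2*t)).comp t h2
  have hs := (Real.hasDerivAt_sin (2*t)).comp t h2
  have hsh := (Real.hasDerivAt_sinh (2*t)).comp t h2
  have := ((hc.add hch).add ((hasDerivAt_id t).mul hs)).sub ((hasDerivAt_id t).mul hsh)
  refine this.congr_deriv ?_
  simp only [Function.comp, id]
  ring

private lemma g_neg {x : ℝ} (hx : 0 < x) :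
    Real.sinh x - Real.sin x + x * Real.cos x - x * Real.cosh x < 0 := by
  set g : ℝ → ℝ := fun y => Real.sinh y - Real.sin y + y * Real.cos y - y * Real.cosh y with hg
  have hderiv : ∀ y : ℝ, HasDerivAt g (-(y * (Real.sinh y + Real.sin y))) y := by
    intro y
    have := (((Real.hasDerivAt_sinh y).sub (Real.hasDerivAt_sin y)).add
      ((hasDerivAt_id y).mul (Real.hasDerivAt_cos y))).sub
      ((hasDerivAt_id y).mul (Real.hasDerivAt_cosh y))
    refine this.congr_deriv ?_
    simp only [id]
    ring
  have hanti : StrictAntiOn g (Ici 0) := by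
    apply strictAntiOn_of_deriv_neg (convex_Ici 0)
    · exact fun y _ => (hderiv y).continuousAt.continuousWithinAt
    · intro y hy
      rw [interior_Ici] at hy
      rw [(hderiv y).deriv]
      have hsin : 0 < Real.sinh y + Real.sin y := by
        rcases le_or_gt y 1 with h1 | h1
        · have hsp : 0 < Real.sin y :=
            Real.sin_pos_of_pos_of_lt_pi hy (by nlinarith [Real.pi_gt_three])
          nlinarith [Real.sinh_pos_iff.mpr hy]
        · have : 1 < Real.sinh y := lt_trans h1 (Real.self_lt_sinh_iff.mpr (h1.trans' one_pos))
          nlinarith [Real.neg_one_le_sin y]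
      have := mul_pos (mem_Ioi.mp hy) hsin
      linarith
  have h0 : g 0 = 0 := by simp [hg]
  have := hanti (by simp : (0:ℝ) ∈ Ici 0) (le_of_lt hx : x ∈ Ici 0) hx
  rw [h0] at this
  exact this

/-- `φ(t) = cos 2t + cosh 2t + t sin 2t − t sinh 2t` satisfies `φ(0) = 2 > 0`, tends to `−∞`
at `+∞`, is strictly decreasing on `(0,∞)`, and hence `φ(t) = 0` has a unique positive root. -/
theorem stmt_6 :
    let φ : ℝ → ℝ := fun t =>
      Real.cos (2 * t) + Real.cosh (2 * t) + t * Real.sin (2 * t) - t * Real.sinh (2 * t)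
    φ 0 = 2 ∧ (0 : ℝ) < 2 ∧
    Tendsto φ atTop atBot ∧
    StrictAntiOn φ (Set.Ioi 0) ∧
    ∃! t : ℝ, 0 < t ∧ φ t = 0 := by
  intro φ
  have hφ0 : φ 0 = 2 := by norm_num [φ]
  have hcont : Continuous φ := by
    simp only [φ]; fun_prop
  have htend : Tendsto φ atTop atBot := by
    have hlim : Tendsto (fun t : ℝ => 2 - t) atTop atBot := by
      have : Tendsto (fun t : ℝ => -t) atTop atBot := tendsto_neg_atTop_atBot
      exact (tendsto_atBot_add_const_left atTop 2 this).congr (fun t => by ring)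
    apply tendsto_atBot_mono' atTop ?_ hlim
    filter_upwards [eventually_ge_atTop (2:ℝ)] with t ht
    have h1 : Real.cos (2*t) ≤ 1 := Real.cos_le_one _
    have h2 : Real.sin (2*t) ≤ 1 := Real.sin_le_one _
    have h3 : Real.cosh (2*t) - Real.sinh (2*t) = Real.exp (-(2*t)) := Real.cosh_sub_sinh _
    have h4 : Real.exp (-(2*t)) ≤ 1 := Real.exp_le_one_iff.mpr (by linarith)
    have h5 : 2*t < Real.sinh (2*t) := Real.self_lt_sinh_iff.mpr (by linarith)
    simp only [φ]
    nlinarith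
  have hanti : StrictAntiOn φ (Set.Ioi 0) := by
    have h : StrictAntiOn φ (Ici 0) := by
      apply strictAntiOn_of_deriv_neg (convex_Ici 0) hcont.continuousOn
      intro t ht
      rw [interior_Ici] at ht
      rw [(hd_phi t).deriv]
      have := g_neg (x := 2*t) (by linarith [mem_Ioi.mp ht])
      linarith
    exact h.mono Ioi_subset_Ici_self
  refine ⟨hφ0, two_pos, htend, hanti, ?_⟩
  -- existence
  have hev : ∀ᶠ t in atTop, φ t < 0 := htend.eventually (eventually_lt_atBot 0)
  obtain ⟨T, hT0, hTneg⟩ := (hev.and (eventually_gt_atTop (0:ℝ))).exists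
  have hsub := intermediate_value_Icc' (le_of_lt hTneg) hcont.continuousOn
  have h0mem : (0:ℝ) ∈ Icc (φ T) (φ 0) := ⟨le_of_lt hT0, by rw [hφ0]; norm_num⟩
  obtain ⟨t, htmem, htroot⟩ := hsub h0mem
  have htpos : 0 < t := by
    rcases lt_or_eq_of_le htmem.1 with h | h
    · exact h
    · exfalso; rw [← h] at htroot; rw [hφ0] at htroot; norm_num at htroot
  refine ⟨t, ⟨htpos, htroot⟩, ?_⟩
  intro s ⟨hspos, hsroot⟩
  by_contra hne
  rcases lt_or_gt_of_ne hne with h | h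
  · have := hanti (mem_Ioi.mpr hspos) (mem_Ioi.mpr htpos) h
    rw [hsroot, htroot] at this; exact lt_irrefl _ this
  · have := hanti (mem_Ioi.mpr htpos) (mem_Ioi.mpr hspos) h
    rw [hsroot, htroot] at this; exact lt_irrefl _ this
end

section
/- Let W̃ ∈ L¹_loc(ℝ^d) be radial and F ∈ L¹(ℝ^{d+1}) be radial with support in the closed ball of radius R. Writing W̃(x̃) = w̃(|x̃|), for the unit vector v = (0,…,0,1) ∈ ℝ^{d+1} one has, for a.e. x = (x̃, x_{d+1}) ∈ ℝ^{d+1}: (w̃(dist(span{v}, ·)) * F)(x) = (W̃ * P[F])(x̃), where P[F](x̃) = ∫_ℝ F(x̃, x_{d+1}) dx_{d+1}. -/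
open Real MeasureTheory Set

lemma normProjLe (d : ℕ) (y : EuclideanSpace ℝ (Fin (d+1))) :
    ‖(show EuclideanSpace ℝ (Fin d) from WithLp.toLp 2 (fun i => y (Fin.castSucc i)))‖ ≤ ‖y‖ := by
  rw [EuclideanSpace.norm_eq, EuclideanSpace.norm_eq]
  apply Real.sqrt_le_sqrt
  rw [Fin.sum_univ_castSucc]
  simp [sq_nonneg]

lemma absLastLe (d : ℕ) (y : EuclideanSpace ℝ (Fin (d+1))) : |y (Fin.last d)| ≤ ‖y‖ := by
  rw [EuclideanSpace.norm_eq]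
  rw [show |y (Fin.last d)| = Real.sqrt (‖y (Fin.last d)‖^2) by
    rw [Real.norm_eq_abs, Real.sqrt_sq_eq_abs, abs_abs]]
  apply Real.sqrt_le_sqrt
  rw [Fin.sum_univ_castSucc]
  have : (0:ℝ) ≤ ∑ i : Fin d, ‖y i.castSucc‖ ^ 2 := by positivity
  linarith

lemma infDistLine (d : ℕ) (u : EuclideanSpace ℝ (Fin (d+1))) :
    Metric.infDist u
      (Submodule.span ℝ {EuclideanSpace.single (Fin.last d) (1 : ℝ)} :
        Submodule ℝ (EuclideanSpace ℝ (Fin (d + 1)))) =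
    ‖(show EuclideanSpace ℝ (Fin d) from WithLp.toLp 2 (fun i => u (Fin.castSucc i)))‖ := by
  set S := (Submodule.span ℝ {EuclideanSpace.single (Fin.last d) (1 : ℝ)} :
        Submodule ℝ (EuclideanSpace ℝ (Fin (d + 1))))
  have key : ∀ c : ℝ, dist u (c • EuclideanSpace.single (Fin.last d) (1:ℝ)) =
      Real.sqrt ((∑ i : Fin d, ‖u i.castSucc‖^2) + ‖u (Fin.last d) - c‖^2) := by
    intro c
    rw [EuclideanSpace.dist_eq, Fin.sum_univ_castSucc]
    congr 1
    · congr 1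
      · apply Finset.sum_congr rfl
        intro i _
        have h1 : (c • EuclideanSpace.single (Fin.last d) (1:ℝ)) i.castSucc = 0 := by
          simp [EuclideanSpace.single_apply, Fin.castSucc_lt_last i, (Fin.castSucc_lt_last i).ne]
        rw [show dist (u i.castSucc) ((c • EuclideanSpace.single (Fin.last d) (1:ℝ)) i.castSucc)
            = ‖u i.castSucc‖ by rw [h1]; simp [Real.dist_eq, Real.norm_eq_abs]]
      · have h2 : (c • EuclideanSpace.single (Fin.last d) (1:ℝ)) (Fin.last d) = c := by
          simp [EuclideanSpace.single_apply]
        rw [h2, Real.dist_eq, Real.norm_eq_abs]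
  have norm_eq : ‖(show EuclideanSpace ℝ (Fin d) from WithLp.toLp 2 (fun i => u (Fin.castSucc i)))‖
      = Real.sqrt (∑ i : Fin d, ‖u i.castSucc‖^2) := EuclideanSpace.norm_eq _
  apply le_antisymm
  · have hm : (u (Fin.last d)) • EuclideanSpace.single (Fin.last d) (1:ℝ) ∈ S :=
      Submodule.smul_mem _ _ (Submodule.subset_span rfl)
    calc Metric.infDist u S
        ≤ dist u ((u (Fin.last d)) • EuclideanSpace.single (Fin.last d) (1:ℝ)) :=
          Metric.infDist_le_dist_of_mem hm
      _ = _ := by rw [key, norm_eq]; simp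
  · rw [Metric.infDist_eq_iInf]
    have : Nonempty S := ⟨0, Submodule.zero_mem S⟩
    apply le_ciInf
    rintro ⟨y, hy⟩
    obtain ⟨c, rfl⟩ := Submodule.mem_span_singleton.mp hy
    rw [key, norm_eq]
    apply Real.sqrt_le_sqrt
    simp [sq_nonneg]

noncomputable def myEquiv (d : ℕ) :
    EuclideanSpace ℝ (Fin (d+1)) ≃ᵐ (EuclideanSpace ℝ (Fin d)) × ℝ :=
  (MeasurableEquiv.toLp 2 (Fin (d+1) → ℝ)).symm.trans
    ((MeasurableEquiv.piFinSuccAbove (fun _ => ℝ) (Fin.last d)).trans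
      ((MeasurableEquiv.prodComm : ℝ × (Fin d → ℝ) ≃ᵐ (Fin d → ℝ) × ℝ).trans
        ((MeasurableEquiv.toLp 2 (Fin d → ℝ)).prodCongr (MeasurableEquiv.refl ℝ))))

lemma myEquiv_mp (d : ℕ) : MeasurePreserving (myEquiv d) volume
    (volume : Measure ((EuclideanSpace ℝ (Fin d)) × ℝ)) := by
  have h1 := EuclideanSpace.volume_preserving_symm_measurableEquiv_toLp (Fin (d+1))
  have h2 := volume_preserving_piFinSuccAbove (fun _ : Fin (d+1) => ℝ) (Fin.last d)
  have h3 : MeasurePreserving (MeasurableEquiv.prodComm : ℝ × (Fin d → ℝ) ≃ᵐ (Fin d → ℝ) × ℝ)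
      volume volume := Measure.measurePreserving_swap ..
  have h4 : MeasurePreserving
      ((MeasurableEquiv.toLp 2 (Fin d → ℝ)).prodCongr (MeasurableEquiv.refl ℝ))
      volume volume :=
    ((EuclideanSpace.volume_preserving_symm_measurableEquiv_toLp (Fin d)).symm _).prod
      (MeasurePreserving.id _)
  exact ((h4.comp h3).comp h2).comp h1

lemma myEquiv_apply (d : ℕ) (y : EuclideanSpace ℝ (Fin (d+1))) :
    myEquiv d y = ((show EuclideanSpace ℝ (Fin d) from WithLp.toLp 2 (fun i => y (Fin.castSucc i))), y (Fin.last d)) := by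
  refine Prod.ext ?_ ?_
  · ext i
    simp [myEquiv, Fin.succAbove_last, MeasurableEquiv.prodCongr, MeasurableEquiv.prodComm,
      Fin.init]
  · simp [myEquiv, MeasurableEquiv.prodCongr, MeasurableEquiv.prodComm]

lemma myEquiv_symm_apply (d : ℕ) (z : EuclideanSpace ℝ (Fin d)) (t : ℝ) :
    (myEquiv d).symm (z, t) = (show EuclideanSpace ℝ (Fin (d+1)) from WithLp.toLp 2 (Fin.snoc (α := fun _ => ℝ) z.ofLp t)) := by
  have : myEquiv d (show EuclideanSpace ℝ (Fin (d+1)) from WithLp.toLp 2 (Fin.snoc (α := fun _ => ℝ) z.ofLp t)) = (z, t) := by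
    rw [myEquiv_apply]
    refine Prod.ext ?_ (by simp)
    ext i
    simp
  rw [← this, MeasurableEquiv.symm_apply_apply]

/-- Key Fubini computation of the dimension-reduction lemma: with
`v = (0,…,0,1) ∈ ℝ^{d+1}`, for a.e. `x ∈ ℝ^{d+1}`,
`(w̃(dist(span v, ·)) * F)(x) = (W̃ * P[F])(x̃)`, where `x̃` collects the first `d`
coordinates of `x` and `P[F](z) = ∫_ℝ F(z, t) dt`. -/
theorem stmt_11 (d : ℕ) (hd : 1 ≤ d) (R : ℝ) (hR : 0 < R)
    (W : EuclideanSpace ℝ (Fin d) → ℝ) (w : ℝ → ℝ)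
    (hWrad : ∀ z : EuclideanSpace ℝ (Fin d), W z = w ‖z‖)
    (hWloc : LocallyIntegrable W)
    (F : EuclideanSpace ℝ (Fin (d + 1)) → ℝ)
    (hFint : Integrable F)
    (hFrad : ∃ f : ℝ → ℝ, ∀ y, F y = f ‖y‖)
    (hFsupp : ∀ y : EuclideanSpace ℝ (Fin (d + 1)), R < ‖y‖ → F y = 0) :
    ∀ᵐ x : EuclideanSpace ℝ (Fin (d + 1)),
      (∫ y : EuclideanSpace ℝ (Fin (d + 1)),
        w (Metric.infDist (x - y)
          (Submodule.span ℝ {EuclideanSpace.single (Fin.last d) (1 : ℝ)} :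
            Submodule ℝ (EuclideanSpace ℝ (Fin (d + 1))))) * F y) =
      ∫ z : EuclideanSpace ℝ (Fin d),
        W ((show EuclideanSpace ℝ (Fin d) from WithLp.toLp 2 (fun i => x (Fin.castSucc i))) - z) *
          ∫ t : ℝ, F (show EuclideanSpace ℝ (Fin (d + 1)) from WithLp.toLp 2 (Fin.snoc (α := fun _ => ℝ) z.ofLp t)) := by
  set e := myEquiv d with he
  set K : (EuclideanSpace ℝ (Fin d)) × ℝ → ℝ := fun p => F (e.symm p) with hKdef
  have hK : Integrable K :=
    ((myEquiv_mp d).symm e).integrable_comp_emb e.symm.measurableEmbedding |>.mpr hFint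
  -- support of K
  have hKsupp : ∀ p : (EuclideanSpace ℝ (Fin d)) × ℝ, K p ≠ 0 → ‖p.1‖ ≤ R ∧ |p.2| ≤ R := by
    intro p hp
    set y := e.symm p with hy
    have hyn : ‖y‖ ≤ R := by
      by_contra h
      exact hp (hFsupp y (lt_of_not_ge h))
    have hep : e y = p := e.apply_symm_apply p
    rw [myEquiv_apply] at hep
    constructor
    · rw [← hep]
      exact (normProjLe d y).trans hyn
    · rw [← hep]
      exact (absLastLe d y).trans hyn
  -- the truncated kernels
  set W' : ℕ → (EuclideanSpace ℝ (Fin d)) → ℝ :=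
    fun n => (Metric.closedBall (0 : EuclideanSpace ℝ (Fin d)) (n + R)).indicator W with hW'def
  have hW'int : ∀ n, Integrable (W' n) := by
    intro n
    rw [hW'def, integrable_indicator_iff measurableSet_closedBall]
    exact hWloc.integrableOn_isCompact (isCompact_closedBall _ _)
  set Wc : ℕ → (EuclideanSpace ℝ (Fin d)) × ℝ → ℝ :=
    fun n q => W' n q.1 * (Set.Icc (-(n + R) : ℝ) (n + R)).indicator (fun _ => (1:ℝ)) q.2
    with hWcdef
  have hWcint : ∀ n, Integrable (Wc n) := by
    intro n
    rw [MeasureTheory.Measure.volume_eq_prod]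
    exact (hW'int n).mul_prod
      ((integrable_indicator_iff measurableSet_Icc).mpr
        (integrableOn_const measure_Icc_lt_top.ne))
  -- a.e. convolution existence, pulled back
  have hK' : Integrable K ((volume : Measure (EuclideanSpace ℝ (Fin d))).prod volume) := by
    rwa [← MeasureTheory.Measure.volume_eq_prod]
  have hWcint' : ∀ n, Integrable (Wc n)
      ((volume : Measure (EuclideanSpace ℝ (Fin d))).prod volume) := by
    intro n; rw [← MeasureTheory.Measure.volume_eq_prod]; exact hWcint n
  have hconv : ∀ n, ∀ᵐ X : (EuclideanSpace ℝ (Fin d)) × ℝ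
      ∂((volume : Measure (EuclideanSpace ℝ (Fin d))).prod volume),
      Integrable (fun p => K p * Wc n (X - p))
        ((volume : Measure (EuclideanSpace ℝ (Fin d))).prod volume) := by
    intro n
    have := hK'.ae_convolution_exists (L := ContinuousLinearMap.mul ℝ ℝ) (hWcint' n)
    filter_upwards [this] with X hX
    simpa [ConvolutionExistsAt] using hX
  have hmp' : MeasurePreserving e volume
      ((volume : Measure (EuclideanSpace ℝ (Fin d))).prod volume) := by
    have := myEquiv_mp d
    rwa [MeasureTheory.Measure.volume_eq_prod] at this
  have hconv' : ∀ᵐ x : EuclideanSpace ℝ (Fin (d+1)), ∀ n,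
      Integrable (fun p => K p * Wc n (e x - p))
        ((volume : Measure (EuclideanSpace ℝ (Fin d))).prod volume) := by
    rw [MeasureTheory.ae_all_iff]
    intro n
    exact hmp'.quasiMeasurePreserving.ae (hconv n)
  filter_upwards [hconv'] with x hx
  set xt : EuclideanSpace ℝ (Fin d) := WithLp.toLp 2 (fun i => x (Fin.castSucc i)) with hxt
  obtain ⟨n, hn⟩ := exists_nat_gt (max ‖xt‖ |x (Fin.last d)|)
  have hxn : ‖xt‖ < n := lt_of_le_of_lt (le_max_left _ _) hn
  have hxln : |x (Fin.last d)| < n := lt_of_le_of_lt (le_max_right _ _) hn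
  set φ : (EuclideanSpace ℝ (Fin d)) × ℝ → ℝ := fun p => W (xt - p.1) * K p with hφdef
  have hφeq : φ = fun p => K p * Wc n (e x - p) := by
    funext p
    by_cases hp : K p = 0
    · simp [hφdef, hp]
    · obtain ⟨hp1, hp2⟩ := hKsupp p hp
      have hex : e x = (xt, x (Fin.last d)) := myEquiv_apply d x
      have h1 : (e x - p).1 = xt - p.1 := by rw [hex]; rfl
      have h2 : (e x - p).2 = x (Fin.last d) - p.2 := by rw [hex]; rfl
      have hball : xt - p.1 ∈ Metric.closedBall (0 : EuclideanSpace ℝ (Fin d)) (n + R) := by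
        rw [Metric.mem_closedBall, dist_zero_right]
        calc ‖xt - p.1‖ ≤ ‖xt‖ + ‖p.1‖ := norm_sub_le _ _
          _ ≤ n + R := add_le_add hxn.le hp1
      have hicc : x (Fin.last d) - p.2 ∈ Set.Icc (-(n + R) : ℝ) (n + R) := by
        have habs : |x (Fin.last d) - p.2| ≤ n + R := by
          calc |x (Fin.last d) - p.2| ≤ |x (Fin.last d)| + |p.2| := abs_sub _ _
            _ ≤ n + R := add_le_add hxln.le hp2
        exact abs_le.mp habs
      show W (xt - p.1) * K p = K p * Wc n (e x - p)
      simp only [hWcdef, h1, h2, hW'def, Set.indicator_of_mem hicc,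
        Set.indicator_of_mem hball]
      ring
  have hφint' : Integrable φ ((volume : Measure (EuclideanSpace ℝ (Fin d))).prod volume) := by
    rw [hφeq]; exact hx n
  -- the chain of equalities
  have step1 : (∫ y : EuclideanSpace ℝ (Fin (d + 1)),
      w (Metric.infDist (x - y)
        (Submodule.span ℝ {EuclideanSpace.single (Fin.last d) (1 : ℝ)} :
          Submodule ℝ (EuclideanSpace ℝ (Fin (d + 1))))) * F y) =
      ∫ y : EuclideanSpace ℝ (Fin (d+1)), φ (e y) := by
    apply integral_congr_ae
    filter_upwards with y
    rw [infDistLine]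
    have hKy : K (e y) = F y := by simp [hKdef]
    have h1 : (show EuclideanSpace ℝ (Fin d) from WithLp.toLp 2 (fun i => (x - y) (Fin.castSucc i)))
        = xt - (show EuclideanSpace ℝ (Fin d) from WithLp.toLp 2 (fun i => y (Fin.castSucc i))) := by
      ext i; simp [hxt]
    rw [h1, ← hWrad]
    show W _ * F y = W (xt - (e y).1) * K (e y)
    rw [hKy, myEquiv_apply]
  have step2 : (∫ y : EuclideanSpace ℝ (Fin (d+1)), φ (e y)) = ∫ p, φ p :=
    (myEquiv_mp d).integral_comp' φ
  have step3 : (∫ p, φ p) = ∫ z, ∫ t, φ (z, t) := by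
    rw [MeasureTheory.Measure.volume_eq_prod, MeasureTheory.integral_prod _ hφint']
  rw [step1, step2, step3]
  apply integral_congr_ae
  filter_upwards with z
  have : ∀ t : ℝ, φ (z, t) = W (xt - z) * F (show EuclideanSpace ℝ (Fin (d+1)) from WithLp.toLp 2 (Fin.snoc (α := fun _ => ℝ) z.ofLp t)) := by
    intro t
    rw [hφdef, hKdef]
    simp only
    rw [myEquiv_symm_apply]
  simp_rw [this]
  rw [MeasureTheory.integral_const_mul]
end

section
/- For d ≥ 1 and a > −d with a ≠ 0, the spherical average (1/|S^d|)·∫_{S^d} dist(span{v}, x)^a dS(v) equals η_{d,a}·|x|^a for every x ∈ ℝ^{d+1}, where η_{d,a} = Γ((a+d)/2)·Γ((d+1)/2) / (Γ((a+d+1)/2)·Γ(d/2)). -/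
open Real MeasureTheory Set Metric

section aux

lemma infDist_span_singleton' {E : Type*} [NormedAddCommGroup E] [InnerProductSpace ℝ E]
    [FiniteDimensional ℝ E] (u x : E) (hu : ‖u‖ = 1) :
    Metric.infDist x (Submodule.span ℝ {u} : Submodule ℝ E) =
      Real.sqrt (‖x‖ ^ 2 - (inner ℝ u x : ℝ) ^ 2) := by
  have h1 : Metric.infDist x (Submodule.span ℝ {u} : Submodule ℝ E)
      = ‖x - (Submodule.span ℝ {u}).starProjection x‖ := by
    rw [Metric.infDist_eq_iInf, Submodule.starProjection_minimal]
    simp only [dist_eq_norm]; rfl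
  rw [h1]
  have h2 : ((Submodule.span ℝ {u}).starProjection x : E) = (inner ℝ u x : ℝ) • u := by
    rw [Submodule.starProjection_singleton]
    rw [hu]; norm_num
  rw [h2, ← Real.sqrt_sq (norm_nonneg (x - (inner ℝ u x : ℝ) • u))]
  congr 1
  rw [norm_sub_sq_real, real_inner_smul_right, norm_smul, real_inner_comm]
  simp [hu, mul_pow]
  ring

lemma exists_linearIsometryEquiv' {E : Type*} [NormedAddCommGroup E] [InnerProductSpace ℝ E]
    [FiniteDimensional ℝ E] (u w : E) (hu : ‖u‖ = 1) (hw : ‖w‖ = 1) :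
    ∃ T : E ≃ₗᵢ[ℝ] E, T w = u := by
  by_cases h : u = -w
  · exact ⟨LinearIsometryEquiv.neg ℝ, by simp [h]⟩
  · have hne : u + w ≠ 0 := fun hc ↦ h (by linear_combination (norm := module) hc)
    refine ⟨Submodule.reflection (Submodule.span ℝ {u + w}), ?_⟩
    have hns : (‖u + w‖ ^ 2 : ℝ) = 2 * (1 + inner ℝ u w) := by
      rw [← real_inner_self_eq_norm_sq, real_inner_add_add_self,
        real_inner_self_eq_norm_sq, real_inner_self_eq_norm_sq, hu, hw]
      ring
    have hinner : ((1 : ℝ) + inner ℝ u w) ≠ 0 := by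
      intro hc
      apply hne
      rw [← norm_eq_zero]
      have h2 : ‖u + w‖ ^ 2 = 0 := by rw [hns, hc]; ring
      exact pow_eq_zero_iff (n := 2) (by norm_num) |>.mp h2
    rw [Submodule.reflection_apply, Submodule.starProjection_singleton]
    have hiw : (inner ℝ (u + w) w : ℝ) = 1 + inner ℝ u w := by
      rw [inner_add_left, real_inner_self_eq_norm_sq, hw, real_inner_comm]
      ring
    rw [hns, hiw]
    have hcoef : (1 + (inner ℝ u w : ℝ)) / (2 * (1 + inner ℝ u w)) = 1 / 2 := by
      field_simp
    rw [RCLike.ofReal_real_eq_id, id_eq, hcoef]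
    rw [two_smul]
    module

open MeasureTheory.Measure in
lemma integral_polar' {E : Type*} [NormedAddCommGroup E] [NormedSpace ℝ E]
    [MeasurableSpace E] [BorelSpace E] [FiniteDimensional ℝ E] [Nontrivial E]
    (μ : Measure E) [μ.IsAddHaarMeasure]
    (F : E → ℝ) (f : Metric.sphere (0 : E) 1 → ℝ) (g : ℝ → ℝ)
    (hF : ∀ (v : Metric.sphere (0 : E) 1) (r : ℝ), 0 < r → F (r • (v : E)) = f v * g r) :
    ∫ x, F x ∂μ = (∫ v, f v ∂μ.toSphere) *
      ∫ r in Ioi (0 : ℝ), r ^ (Module.finrank ℝ E - 1) * g r := by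
  have h2 : ∀ x : ({(0 : E)}ᶜ : Set E),
      F x = f (homeomorphUnitSphereProd E x).1 * g (homeomorphUnitSphereProd E x).2 := by
    intro x
    conv_lhs => rw [← (homeomorphUnitSphereProd E).symm_apply_apply x]
    set p := homeomorphUnitSphereProd E x
    have : ((homeomorphUnitSphereProd E).symm p : E) = (p.2 : ℝ) • (p.1 : E) := rfl
    rw [this, hF _ _ p.2.2]
  calc ∫ x, F x ∂μ = ∫ x : ({(0 : E)}ᶜ : Set E), F x ∂(μ.comap (↑)) := by
        rw [integral_subtype_comap (measurableSet_singleton _).compl fun x ↦ F x,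
          restrict_compl_singleton]
    _ = ∫ x : ({(0 : E)}ᶜ : Set E),
          f (homeomorphUnitSphereProd E x).1 * g (homeomorphUnitSphereProd E x).2
          ∂(μ.comap (↑)) := integral_congr_ae (ae_of_all _ h2)
    _ = ∫ p : Metric.sphere (0 : E) 1 × Ioi (0 : ℝ), f p.1 * g p.2
          ∂(μ.toSphere.prod (volumeIoiPow (Module.finrank ℝ E - 1))) :=
        (μ.measurePreserving_homeomorphUnitSphereProd).integral_comp
          (Homeomorph.measurableEmbedding _) (fun p ↦ f p.1 * g (p.2 : ℝ))
    _ = (∫ v, f v ∂μ.toSphere) * ∫ r : Ioi (0:ℝ), g r ∂(volumeIoiPow (Module.finrank ℝ E - 1)) :=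
        integral_prod_mul f (fun r : Ioi (0:ℝ) ↦ g r)
    _ = (∫ v, f v ∂μ.toSphere) * ∫ r in Ioi (0 : ℝ), r ^ (Module.finrank ℝ E - 1) * g r := by
        congr 1
        simp only [Measure.volumeIoiPow, ENNReal.ofReal]
        rw [integral_withDensity_eq_integral_smul
            ((measurable_subtype_coe.pow_const _).real_toNNReal),
          integral_subtype_comap measurableSet_Ioi
            fun a ↦ Real.toNNReal (a ^ (Module.finrank ℝ E - 1)) • g a,
          setIntegral_congr_fun measurableSet_Ioi fun x hx ↦ ?_]
        rw [NNReal.smul_def, Real.coe_toNNReal _ (pow_nonneg hx.out.le _), smul_eq_mul]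

lemma pi_radial (m : ℕ) (a : ℝ) (ha : -(m + 1 : ℝ) < a) :
    ∫ z : Fin (m+1) → ℝ, Real.sqrt (∑ j, z j ^ 2) ^ a * Real.exp (-∑ j, z j ^ 2)
    = (m + 1 : ℝ) * (Real.sqrt π ^ (m+1) / Real.Gamma ((m+1) / 2 + 1))
        * ((1 / 2) * Real.Gamma (((m+1 : ℕ) + a) / 2)) := by
  have hmp : MeasurePreserving ((MeasurableEquiv.toLp 2 (Fin (m+1) → ℝ)).symm)
      volume volume := EuclideanSpace.volume_preserving_symm_measurableEquiv_toLp _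
  rw [← hmp.integral_comp (MeasurableEquiv.measurableEmbedding _)]
  have hcoord : ∀ x : EuclideanSpace ℝ (Fin (m+1)),
      (∑ j, ((MeasurableEquiv.toLp 2 (Fin (m+1) → ℝ)).symm x) j ^ 2) = ‖x‖ ^ 2 := by
    intro x
    rw [EuclideanSpace.norm_eq, Real.sq_sqrt (by positivity)]
    simp only [Real.norm_eq_abs, sq_abs]
    rfl
  simp_rw [hcoord]
  rw [show (fun x : EuclideanSpace ℝ (Fin (m+1)) ↦
        Real.sqrt (‖x‖^2) ^ a * Real.exp (-‖x‖^2)) =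
      (fun x ↦ (fun r : ℝ ↦ Real.sqrt (r^2) ^ a * Real.exp (-r^2)) ‖x‖) from rfl,
    integral_fun_norm_addHaar volume (fun r : ℝ ↦ Real.sqrt (r^2) ^ a * Real.exp (-r^2))]
  rw [finrank_euclideanSpace_fin]
  rw [nsmul_eq_mul, smul_eq_mul]
  have hball : ((volume (ball (0 : EuclideanSpace ℝ (Fin (m+1))) 1)).toReal)
      = Real.sqrt π ^ (m+1) / Real.Gamma ((m+1) / 2 + 1) := by
    rw [EuclideanSpace.volume_ball]
    simp only [Fintype.card_fin, ENNReal.ofReal_one, one_pow, one_mul]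
    rw [ENNReal.toReal_ofReal (div_nonneg (by positivity)
      (Real.Gamma_pos_of_pos (by positivity)).le)]
    push_cast
    ring_nf
  rw [measureReal_def, hball]
  have hint : ∫ y in Ioi (0:ℝ), y ^ (m + 1 - 1) • (Real.sqrt (y^2) ^ a * Real.exp (-y^2))
      = (1 / 2) * Real.Gamma (((m+1 : ℕ) + a) / 2) := by
    rw [setIntegral_congr_fun measurableSet_Ioi
      (g := fun y : ℝ ↦ y ^ ((m : ℝ) + a) * Real.exp (-y ^ (2:ℝ))) ?_]
    · rw [integral_rpow_mul_exp_neg_rpow two_pos (by push_cast; linarith)]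
      norm_num
      congr 1
      push_cast
      ring
    · intro y hy
      have hy0 : (0:ℝ) < y := hy
      simp only [smul_eq_mul, Nat.add_sub_cancel]
      rw [Real.rpow_two, Real.sqrt_sq hy0.le, Real.rpow_add hy0,
        ← Real.rpow_natCast y m]
      ring
  rw [hint]
  push_cast
  ring

lemma way2_single (m : ℕ) (a : ℝ) (ha : -(m + 1 : ℝ) < a) :
    ∫ x : EuclideanSpace ℝ (Fin (m + 1 + 1)),
      Real.sqrt (‖x‖ ^ 2 - (inner ℝ (EuclideanSpace.single (0 : Fin (m+1+1)) (1:ℝ)) x : ℝ) ^ 2) ^ a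
        * Real.exp (-‖x‖ ^ 2)
    = Real.sqrt π * ((m + 1 : ℝ) * (Real.sqrt π ^ (m+1) / Real.Gamma ((m+1) / 2 + 1))
        * ((1 / 2) * Real.Gamma (((m+1 : ℕ) + a) / 2))) := by
  have hmp : MeasurePreserving ((MeasurableEquiv.toLp 2 (Fin (m+1+1) → ℝ)))
      volume volume := (EuclideanSpace.volume_preserving_symm_measurableEquiv_toLp _).symm
  rw [← hmp.integral_comp (MeasurableEquiv.measurableEmbedding _)]
  have key : ∀ y : Fin (m+1+1) → ℝ,
      Real.sqrt (‖(MeasurableEquiv.toLp 2 (Fin (m+1+1) → ℝ)) y‖ ^ 2 -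
          (inner ℝ (EuclideanSpace.single (0 : Fin (m+1+1)) (1:ℝ))
            ((MeasurableEquiv.toLp 2 (Fin (m+1+1) → ℝ)) y) : ℝ) ^ 2) ^ a
        * Real.exp (-‖(MeasurableEquiv.toLp 2 (Fin (m+1+1) → ℝ)) y‖ ^ 2)
      = Real.sqrt ((∑ j, y j ^ 2) - y 0 ^ 2) ^ a * Real.exp (-∑ j, y j ^ 2) := by
    intro y
    have hn : ‖(MeasurableEquiv.toLp 2 (Fin (m+1+1) → ℝ)) y‖ ^ 2 = ∑ j, y j ^ 2 := by
      rw [EuclideanSpace.norm_eq, Real.sq_sqrt (by positivity)]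
      simp [sq_abs]
    have hi : (inner ℝ (EuclideanSpace.single (0 : Fin (m+1+1)) (1:ℝ))
        ((MeasurableEquiv.toLp 2 (Fin (m+1+1) → ℝ)) y) : ℝ) = y 0 := by
      rw [EuclideanSpace.inner_single_left]
      simp
    rw [hn, hi]
  simp_rw [key]
  have hsp : MeasurePreserving
      ((MeasurableEquiv.piFinSuccAbove (fun _ : Fin (m+1+1) ↦ ℝ) 0).symm)
      volume volume :=
    (MeasureTheory.volume_preserving_piFinSuccAbove (fun _ : Fin (m+1+1) ↦ ℝ) 0).symm
  rw [← hsp.integral_comp (MeasurableEquiv.measurableEmbedding _)]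
  have key2 : ∀ p : ℝ × (Fin (m+1) → ℝ),
      (fun y : Fin (m+1+1) → ℝ ↦
        Real.sqrt ((∑ j, y j ^ 2) - y 0 ^ 2) ^ a * Real.exp (-∑ j, y j ^ 2))
        ((MeasurableEquiv.piFinSuccAbove (fun _ : Fin (m+1+1) ↦ ℝ) 0).symm p)
      = Real.exp (-p.1 ^ 2) *
          (Real.sqrt (∑ j, p.2 j ^ 2) ^ a * Real.exp (-∑ j, p.2 j ^ 2)) := by
    intro p
    have hy : ((MeasurableEquiv.piFinSuccAbove (fun _ : Fin (m+1+1) ↦ ℝ) 0).symm p)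
        = Fin.cons p.1 p.2 := by
      show (Fin.insertNthEquiv (fun _ : Fin (m+1+1) ↦ ℝ) 0) p = _
      simp [Fin.insertNthEquiv, Fin.insertNth_zero']
    rw [hy]
    simp only [Fin.sum_univ_succ, Fin.cons_zero, Fin.cons_succ]
    rw [add_sub_cancel_left, neg_add, Real.exp_add]
    ring
  simp_rw [key2]
  rw [MeasureTheory.Measure.volume_eq_prod,
    integral_prod_mul (f := fun t : ℝ ↦ Real.exp (-t ^ 2))
      (g := fun z : Fin (m+1) → ℝ ↦
        Real.sqrt (∑ j, z j ^ 2) ^ a * Real.exp (-∑ j, z j ^ 2))]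
  have hg : ∫ t : ℝ, Real.exp (-t ^ 2) = Real.sqrt π := by
    simpa using integral_gaussian 1
  rw [hg, pi_radial m a ha]

end aux

/-- For `d ≥ 1`, `a > −d`, `a ≠ 0`, the average over the unit sphere `S^d ⊂ ℝ^{d+1}`
of `dist(span v, x)^a` equals `η_{d,a}·|x|^a`, where
`η_{d,a} = Γ((a+d)/2)Γ((d+1)/2)/(Γ((a+d+1)/2)Γ(d/2))`. The surface measure on `S^d` is
`volume.toSphere`, whose total mass is `|S^d|`. -/
theorem stmt_12 (d : ℕ) (hd : 1 ≤ d) (a : ℝ) (ha : -(d : ℝ) < a) (ha0 : a ≠ 0) :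
    ∀ x : EuclideanSpace ℝ (Fin (d + 1)),
      (1 / (((volume : Measure (EuclideanSpace ℝ (Fin (d + 1)))).toSphere Set.univ).toReal)) *
        ∫ v : Metric.sphere (0 : EuclideanSpace ℝ (Fin (d + 1))) 1,
          (Metric.infDist x
            (Submodule.span ℝ {(v : EuclideanSpace ℝ (Fin (d + 1)))} :
              Submodule ℝ (EuclideanSpace ℝ (Fin (d + 1))))) ^ a
          ∂((volume : Measure (EuclideanSpace ℝ (Fin (d + 1)))).toSphere) =
      (Real.Gamma ((a + d) / 2) * Real.Gamma ((d + 1) / 2) /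
        (Real.Gamma ((a + d + 1) / 2) * Real.Gamma (d / 2))) * ‖x‖ ^ a := by
  obtain ⟨m, rfl⟩ : ∃ m, d = m + 1 := ⟨d - 1, (Nat.succ_pred_eq_of_pos hd).symm⟩
  intro x
  by_cases hx : x = 0
  · subst hx
    have h0 : ∀ v : Metric.sphere (0 : EuclideanSpace ℝ (Fin (m+1+1))) 1,
        (Metric.infDist (0 : EuclideanSpace ℝ (Fin (m+1+1)))
          (Submodule.span ℝ {(v : EuclideanSpace ℝ (Fin (m+1+1)))} :
            Submodule ℝ (EuclideanSpace ℝ (Fin (m+1+1))))) ^ a = 0 := by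
      intro v
      rw [Metric.infDist_zero_of_mem (Submodule.zero_mem _), Real.zero_rpow ha0]
    simp_rw [h0]
    rw [integral_zero]
    simp [Real.zero_rpow ha0]
  · have hx0 : (0:ℝ) < ‖x‖ := norm_pos_iff.mpr hx
    set u : EuclideanSpace ℝ (Fin (m+1+1)) := ‖x‖⁻¹ • x with hu_def
    have hu : ‖u‖ = 1 := norm_smul_inv_norm hx
    have hxu : x = ‖x‖ • u := by
      rw [hu_def, smul_smul, mul_inv_cancel₀ hx0.ne', one_smul]
    set f : Metric.sphere (0 : EuclideanSpace ℝ (Fin (m+1+1))) 1 → ℝ :=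
      fun v ↦ Real.sqrt (‖(v : EuclideanSpace ℝ (Fin (m+1+1)))‖ ^ 2 -
        (inner ℝ u (v : EuclideanSpace ℝ (Fin (m+1+1))) : ℝ) ^ 2) ^ a with hf_def
    have hstepA : (∫ v : Metric.sphere (0 : EuclideanSpace ℝ (Fin (m+1+1))) 1,
          (Metric.infDist x
            (Submodule.span ℝ {(v : EuclideanSpace ℝ (Fin (m+1+1)))} :
              Submodule ℝ (EuclideanSpace ℝ (Fin (m+1+1))))) ^ a
          ∂((volume : Measure (EuclideanSpace ℝ (Fin (m+1+1)))).toSphere))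
        = ‖x‖ ^ a * ∫ v, f v
            ∂((volume : Measure (EuclideanSpace ℝ (Fin (m+1+1)))).toSphere) := by
      rw [← integral_const_mul]
      refine integral_congr_ae (ae_of_all _ fun v ↦ ?_)
      dsimp only
      have hv : ‖(v : EuclideanSpace ℝ (Fin (m+1+1)))‖ = 1 := norm_eq_of_mem_sphere v
      rw [infDist_span_singleton' (v : EuclideanSpace ℝ (Fin (m+1+1))) x hv]
      have hinner : (inner ℝ (v : EuclideanSpace ℝ (Fin (m+1+1))) x : ℝ)
          = ‖x‖ * (inner ℝ u (v : EuclideanSpace ℝ (Fin (m+1+1))) : ℝ) := by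
        conv_lhs => rw [hxu]
        rw [real_inner_smul_right, real_inner_comm]
      rw [hinner]
      have harg : ‖x‖^2 - (‖x‖ * (inner ℝ u (v : EuclideanSpace ℝ (Fin (m+1+1))) : ℝ))^2
          = ‖x‖^2 * (‖(v : EuclideanSpace ℝ (Fin (m+1+1)))‖^2 -
              (inner ℝ u (v : EuclideanSpace ℝ (Fin (m+1+1))) : ℝ)^2) := by
        rw [hv]; ring
      rw [harg, Real.sqrt_mul (sq_nonneg _), Real.sqrt_sq (norm_nonneg x),
        Real.mul_rpow (norm_nonneg x) (Real.sqrt_nonneg _)]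
    -- Way 1 : polar decomposition
    have hpolar := integral_polar' (E := EuclideanSpace ℝ (Fin (m+1+1))) volume
      (fun y ↦ Real.sqrt (‖y‖^2 - (inner ℝ u y : ℝ)^2) ^ a * Real.exp (-‖y‖^2)) f
      (fun r ↦ r ^ a * Real.exp (-r^2)) ?_
    rotate_left
    · intro v r hr
      have hv : ‖(v : EuclideanSpace ℝ (Fin (m+1+1)))‖ = 1 := norm_eq_of_mem_sphere v
      rw [norm_smul, Real.norm_eq_abs, abs_of_pos hr, hv, mul_one,
        real_inner_smul_right]
      have harg : r ^ 2 - (r * (inner ℝ u (v : EuclideanSpace ℝ (Fin (m+1+1))) : ℝ)) ^ 2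
          = r^2 * (‖(v : EuclideanSpace ℝ (Fin (m+1+1)))‖^2 -
              (inner ℝ u (v : EuclideanSpace ℝ (Fin (m+1+1))) : ℝ)^2) := by
        rw [hv]; ring
      rw [harg, Real.sqrt_mul (sq_nonneg r), Real.sqrt_sq hr.le,
        Real.mul_rpow hr.le (Real.sqrt_nonneg _)]
      simp only [hf_def]
      ring
    have hfr : Module.finrank ℝ (EuclideanSpace ℝ (Fin (m+1+1))) - 1 = m + 1 := by
      rw [finrank_euclideanSpace_fin]
      omega
    rw [hfr] at hpolar
    have hioi : ∫ r in Ioi (0:ℝ), r ^ (m + 1) * (r ^ a * Real.exp (-r^2))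
        = (1/2) * Real.Gamma (((m:ℝ) + 1 + a + 1) / 2) := by
      rw [setIntegral_congr_fun measurableSet_Ioi
        (g := fun y : ℝ ↦ y ^ ((m:ℝ) + 1 + a) * Real.exp (-y ^ (2:ℝ))) ?_]
      · rw [integral_rpow_mul_exp_neg_rpow two_pos
          (by have := ha; push_cast at this; linarith)]
      · intro y hy
        have hy0 : (0:ℝ) < y := hy
        dsimp only
        rw [Real.rpow_two, ← Real.rpow_natCast y (m+1), ← mul_assoc,
          ← Real.rpow_add hy0]
        push_cast
        ring_nf
    rw [hioi] at hpolar
    -- Way 2 : rotate u to a coordinate vector and compute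
    obtain ⟨T, hT⟩ := exists_linearIsometryEquiv' u
      (EuclideanSpace.single (0 : Fin (m+1+1)) (1:ℝ)) hu (by simp)
    have hinv : ∫ y : EuclideanSpace ℝ (Fin (m+1+1)),
          Real.sqrt (‖y‖^2 - (inner ℝ u y : ℝ)^2) ^ a * Real.exp (-‖y‖^2)
        = ∫ y : EuclideanSpace ℝ (Fin (m+1+1)),
          Real.sqrt (‖y‖^2 - (inner ℝ (EuclideanSpace.single (0 : Fin (m+1+1)) (1:ℝ)) y : ℝ)^2) ^ a
            * Real.exp (-‖y‖^2) := by
      rw [← (T.measurePreserving).integral_comp T.toHomeomorph.measurableEmbedding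
        (fun y ↦ Real.sqrt (‖y‖^2 - (inner ℝ u y : ℝ)^2) ^ a * Real.exp (-‖y‖^2))]
      refine integral_congr_ae (ae_of_all _ fun y ↦ ?_)
      simp only [LinearIsometryEquiv.coe_toHomeomorph]
      rw [LinearIsometryEquiv.norm_map, ← hT, LinearIsometryEquiv.inner_map_map]
    have hway2 := way2_single m a (by push_cast at ha ⊢; linarith)
    rw [hinv, hway2] at hpolar
    -- total mass of the sphere measure
    have hS : (((volume : Measure (EuclideanSpace ℝ (Fin (m+1+1)))).toSphere Set.univ).toReal)
        = (m+1+1 : ℝ) * (Real.sqrt π ^ (m+1+1) / Real.Gamma ((m+1+1) / 2 + 1)) := by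
      rw [Measure.toSphere_apply_univ, EuclideanSpace.volume_ball]
      simp only [Fintype.card_fin, ENNReal.ofReal_one, one_pow, one_mul,
        finrank_euclideanSpace_fin]
      rw [ENNReal.toReal_mul, ENNReal.toReal_natCast,
        ENNReal.toReal_ofReal (div_nonneg (by positivity)
          (Real.Gamma_pos_of_pos (by positivity)).le)]
      push_cast
      ring_nf
    rw [hstepA, hS]
    -- it remains to do Gamma-function algebra
    have hC0 : (0:ℝ) < Real.Gamma (((m:ℝ) + 1 + a + 1) / 2) := by
      apply Real.Gamma_pos_of_pos
      push_cast at ha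
      linarith
    have hJval : (∫ v, f v ∂(volume : Measure (EuclideanSpace ℝ (Fin (m+1+1)))).toSphere)
        = Real.sqrt π * ((m + 1 : ℝ) *
            (Real.sqrt π ^ (m+1) / Real.Gamma ((m+1) / 2 + 1))
            * ((1 / 2) * Real.Gamma (((m+1 : ℕ) + a) / 2)))
          / ((1/2) * Real.Gamma (((m:ℝ) + 1 + a + 1) / 2)) := by
      rw [eq_div_iff (by positivity)]
      exact hpolar.symm
    rw [hJval]
    have hG1 : Real.Gamma (((m:ℝ)+1) / 2 + 1) = (((m:ℝ)+1)/2) * Real.Gamma (((m:ℝ)+1)/2) :=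
      Real.Gamma_add_one (by positivity)
    have hG2 : Real.Gamma (((m:ℝ)+1+1) / 2 + 1) = (((m:ℝ)+1+1)/2) * Real.Gamma (((m:ℝ)+1+1)/2) :=
      Real.Gamma_add_one (by positivity)
    have hD0 : (0:ℝ) < Real.Gamma (((m:ℝ)+1)/2) := Real.Gamma_pos_of_pos (by positivity)
    have hB0 : (0:ℝ) < Real.Gamma (((m:ℝ)+1+1)/2) := Real.Gamma_pos_of_pos (by positivity)
    have hsp : (0:ℝ) < Real.sqrt π := Real.sqrt_pos.mpr Real.pi_pos
    push_cast
    rw [hG1, hG2]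
    rw [show ((m:ℝ) + 1 + a) / 2 = (a + ((m:ℝ)+1)) / 2 by ring,
      show ((m:ℝ) + 1 + a + 1) / 2 = (a + ((m:ℝ)+1) + 1) / 2 by ring]
    have hCne : Real.Gamma ((a + ((m:ℝ) + 1) + 1) / 2) ≠ 0 := by
      refine (Real.Gamma_pos_of_pos ?_).ne'
      have := ha; push_cast at this; linarith
    have hAne : Real.Gamma ((a + ((m:ℝ) + 1)) / 2) ≠ 0 := by
      refine (Real.Gamma_pos_of_pos ?_).ne'
      have := ha; push_cast at this; linarith
    have hBne : Real.Gamma (((m:ℝ) + 1 + 1) / 2) ≠ 0 := hB0.ne'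
    have hDne : Real.Gamma (((m:ℝ) + 1) / 2) ≠ 0 := hD0.ne'
    have hsne : Real.sqrt π ≠ 0 := hsp.ne'
    set s := Real.sqrt π with hs
    set N := ‖x‖ ^ a with hN
    set A := Real.Gamma ((a + ((m:ℝ) + 1)) / 2) with hA
    set C := Real.Gamma ((a + ((m:ℝ) + 1) + 1) / 2) with hC
    set B := Real.Gamma (((m:ℝ) + 1 + 1) / 2) with hB
    set D := Real.Gamma (((m:ℝ) + 1) / 2) with hD
    have hm1 : ((m:ℝ) + 1) ≠ 0 := by positivity
    have hm2 : ((m:ℝ) + 1 + 1) ≠ 0 := by positivity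
    have hspow : s ^ (m + 1) ≠ 0 := pow_ne_zero _ hsne
    rw [pow_succ]
    field_simp
end
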